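/- arXiv:2604.24032 — 3 statements merged into one kernel-verified Lean document; each statement's English description precedes it below -/
import Mathlib

section
/- Let Y₁, …, Y_n (n ≥ 2) be i.i.d. random variables with values in a measurable space E, h : E × E → ℝ a measurable, symmetric, bounded kernel, θ = E[h(Y₁,Y₂)], g(y) = E[h(y,Y₁)], ψ(y) = 2(g(y) − θ), σ₁² = Var(g(Y₁)), σ₂² = Var(h(Y₁,Y₂)), and U_n = (binom(n,2))⁻¹ Σ_{1≤i<k≤n} h(Y_i,Y_k). Then the difference between the U-statistic and its Hájek projection satisfies E[(U_n − θ − n⁻¹ Σ_{i=1}^n ψ(Y_i))²] = 2(σ₂² − 2σ₁²)/(n(n−1)); consequently E[(√n (U_n − θ) − n^{−1/2} Σ_{i=1}^n ψ(Y_i))²] = 2(σ₂² − 2σ₁²)/(n−1), which tends to 0 as n → ∞, so √n (U_n − θ) equals n^{−1/2} Σ_{i=1}^n ψ(Y_i) up to a remainder tending to 0 in L². -/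
open MeasureTheory ProbabilityTheory Filter Finset


private lemma integrable_of_bdd {α : Type*} [MeasurableSpace α] {μ : Measure α}
    [IsFiniteMeasure μ] {f : α → ℝ} (hm : AEStronglyMeasurable f μ) {C : ℝ}
    (hb : ∀ x, |f x| ≤ C) : Integrable f μ :=
  ⟨hm, HasFiniteIntegral.of_bounded (C := C) (ae_of_all _ fun x => by
    simpa [Real.norm_eq_abs] using hb x)⟩

private lemma abs_integral_le_of_bdd {α : Type*} [MeasurableSpace α] {μ : Measure α}
    [IsProbabilityMeasure μ] (f : α → ℝ) {C : ℝ} (hb : ∀ x, |f x| ≤ C) :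
    |∫ x, f x ∂μ| ≤ C := by
  have := norm_integral_le_of_norm_le_const (μ := μ) (f := f) (C := C)
    (ae_of_all _ fun x => by simpa [Real.norm_eq_abs] using hb x)
  simpa [Real.norm_eq_abs] using this

private lemma sum_pairs (a : ℕ → ℝ) (n : ℕ) :
    ∑ k ∈ range n, ∑ i ∈ range k, (a i + a k) = ((n : ℝ) - 1) * ∑ i ∈ range n, a i := by
  induction n with
  | zero => simp
  | succ n ih =>
      rw [Finset.sum_range_succ, ih, Finset.sum_add_distrib, Finset.sum_const, card_range,
        Finset.sum_range_succ (f := a), nsmul_eq_mul]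
      push_cast
      ring

private lemma choose_two_cast (n : ℕ) (hn : 2 ≤ n) :
    (n.choose 2 : ℝ) = (n : ℝ) * ((n : ℝ) - 1) / 2 := by
  have h2 : (n.choose 2) * 2 = n * (n - 1) := by
    rw [Nat.choose_two_right, Nat.div_mul_cancel (Nat.even_mul_pred_self n).two_dvd]
  have := congrArg (Nat.cast : ℕ → ℝ) h2
  push_cast [Nat.cast_sub (by omega : 1 ≤ n)] at this
  linarith

private lemma sum_range_id_cast (n : ℕ) : (∑ i ∈ range n, (i : ℝ)) = (n.choose 2 : ℝ) := by
  rw [← Nat.cast_sum]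
  norm_cast
  rw [Finset.sum_range_id]
  exact (Nat.choose_two_right n).symm

private lemma abs_mul_le {a b c d : ℝ} (h1 : |a| ≤ c) (h2 : |b| ≤ d) : |a * b| ≤ c * d := by
  rw [abs_mul]
  exact mul_le_mul h1 h2 (abs_nonneg _) ((abs_nonneg a).trans h1)

private lemma abs_sq_le {a c : ℝ} (h1 : |a| ≤ c) : |a ^ 2| ≤ c ^ 2 := by
  rw [abs_pow]; exact pow_le_pow_left₀ (abs_nonneg _) h1 2

/-- The degree-2 U-statistic equals its Hájek projection up to an `L²` remainder.
With `θ = E[h(Y₁,Y₂)]`, `g(y) = E[h(y,Y₁)]`, `ψ(y) = 2(g(y) − θ)`, `σ₁² = Var(g(Y₁))`,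
`σ₂² = Var(h(Y₁,Y₂))`, and `U_n = (binom(n,2))⁻¹ ∑_{i<k≤n} h(Y_i,Y_k)`, for every `n ≥ 2`:
`E[(U_n − θ − n⁻¹ ∑_{i=1}^n ψ(Y_i))²] = 2(σ₂² − 2σ₁²)/(n(n−1))`, hence
`E[(√n (U_n − θ) − n^{−1/2} ∑_{i=1}^n ψ(Y_i))²] = 2(σ₂² − 2σ₁²)/(n−1)`, which tends to `0`
as `n → ∞`. -/
theorem ustatistic_hajek_projection_L2
    {Ω E : Type*} [MeasurableSpace Ω] [MeasurableSpace E]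
    (P : Measure Ω) [IsProbabilityMeasure P]
    (Y : ℕ → Ω → E) (hYmeas : ∀ i, Measurable (Y i))
    (hYindep : iIndepFun Y P)
    (ν : Measure E) (hYlaw : ∀ i, P.map (Y i) = ν)
    (h : E → E → ℝ) (hmeas : Measurable (Function.uncurry h))
    (hsymm : ∀ x y, h x y = h y x)
    (hbdd : ∃ C : ℝ, ∀ x y, |h x y| ≤ C)
    (θ : ℝ) (hθ : θ = ∫ ω, h (Y 0 ω) (Y 1 ω) ∂P)
    (g : E → ℝ) (hg : ∀ y, g y = ∫ ω, h y (Y 0 ω) ∂P)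
    (ψ : E → ℝ) (hψ : ∀ y, ψ y = 2 * (g y - θ))
    (σ₁sq : ℝ) (hσ₁ : σ₁sq = variance (fun ω => g (Y 0 ω)) P)
    (σ₂sq : ℝ) (hσ₂ : σ₂sq = variance (fun ω => h (Y 0 ω) (Y 1 ω)) P)
    (U : ℕ → Ω → ℝ)
    (hU : ∀ n ω, U n ω =
      ((n.choose 2 : ℝ))⁻¹ * ∑ k ∈ Finset.range n, ∑ i ∈ Finset.range k, h (Y i ω) (Y k ω)) :
    (∀ n : ℕ, 2 ≤ n →
      (∫ ω, (U n ω - θ - (n : ℝ)⁻¹ * ∑ i ∈ Finset.range n, ψ (Y i ω)) ^ 2 ∂P) =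
        2 * (σ₂sq - 2 * σ₁sq) / ((n : ℝ) * ((n : ℝ) - 1)) ∧
      (∫ ω, (Real.sqrt n * (U n ω - θ) -
          (Real.sqrt n)⁻¹ * ∑ i ∈ Finset.range n, ψ (Y i ω)) ^ 2 ∂P) =
        2 * (σ₂sq - 2 * σ₁sq) / ((n : ℝ) - 1)) ∧
    Tendsto (fun n : ℕ =>
        ∫ ω, (Real.sqrt n * (U n ω - θ) -
          (Real.sqrt n)⁻¹ * ∑ i ∈ Finset.range n, ψ (Y i ω)) ^ 2 ∂P) atTop (nhds 0) := by
  obtain ⟨C', hC'⟩ := hbdd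
  set C₀ : ℝ := max C' 0 with hC₀def
  have hC₀ : ∀ x y, |h x y| ≤ C₀ := fun x y => le_trans (hC' x y) (le_max_left _ _)
  have hC₀0 : (0:ℝ) ≤ C₀ := le_max_right _ _
  haveI : IsProbabilityMeasure ν := by
    rw [← hYlaw 0]; exact Measure.isProbabilityMeasure_map (hYmeas 0).aemeasurable
  -- joint laws
  have law2 : ∀ i j : ℕ, i ≠ j → P.map (fun ω => (Y i ω, Y j ω)) = ν.prod ν := by
    intro i j hij
    have hind := hYindep.indepFun hij
    rw [indepFun_iff_map_prod_eq_prod_map_map (hYmeas i).aemeasurable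
      (hYmeas j).aemeasurable] at hind
    rw [hind, hYlaw i, hYlaw j]
  have law3 : ∀ i j k : ℕ, i ≠ j → i ≠ k → j ≠ k →
      P.map (fun ω => (Y i ω, (Y j ω, Y k ω))) = ν.prod (ν.prod ν) := by
    intro i j k hij hik hjk
    have hind := (hYindep.indepFun_prodMk hYmeas j k i hij.symm hik.symm).symm
    rw [indepFun_iff_map_prod_eq_prod_map_map (hYmeas i).aemeasurable
      ((hYmeas j).prodMk (hYmeas k)).aemeasurable] at hind
    rw [hind, hYlaw i, law2 j k hjk]
  have law4 : ∀ i j k l : ℕ, i ≠ j → i ≠ k → i ≠ l → j ≠ k → j ≠ l → k ≠ l →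
      P.map (fun ω => ((Y i ω, Y j ω), (Y k ω, Y l ω))) = (ν.prod ν).prod (ν.prod ν) := by
    intro i j k l hij hik hil hjk hjl hkl
    have hind := hYindep.indepFun_prodMk_prodMk hYmeas i j k l hik hil hjk hjl
    rw [indepFun_iff_map_prod_eq_prod_map_map ((hYmeas i).prodMk (hYmeas j)).aemeasurable
      ((hYmeas k).prodMk (hYmeas l)).aemeasurable] at hind
    rw [hind, law2 i j hij, law2 k l hkl]
  -- transfer of integrals
  have key1 : ∀ (i : ℕ) (F : E → ℝ), Measurable F →
      ∫ ω, F (Y i ω) ∂P = ∫ x, F x ∂ν := by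
    intro i F hF
    rw [← hYlaw i, integral_map (hYmeas i).aemeasurable hF.aestronglyMeasurable]
  have key2 : ∀ (i j : ℕ), i ≠ j → ∀ (F : E × E → ℝ), Measurable F →
      ∫ ω, F (Y i ω, Y j ω) ∂P = ∫ p, F p ∂(ν.prod ν) := by
    intro i j hij F hF
    rw [← law2 i j hij,
      integral_map ((hYmeas i).prodMk (hYmeas j)).aemeasurable hF.aestronglyMeasurable]
  have key3 : ∀ (i j k : ℕ), i ≠ j → i ≠ k → j ≠ k → ∀ (F : E × (E × E) → ℝ), Measurable F →
      ∫ ω, F (Y i ω, (Y j ω, Y k ω)) ∂P = ∫ p, F p ∂(ν.prod (ν.prod ν)) := by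
    intro i j k h1 h2 h3 F hF
    rw [← law3 i j k h1 h2 h3,
      integral_map ((hYmeas i).prodMk ((hYmeas j).prodMk (hYmeas k))).aemeasurable
        hF.aestronglyMeasurable]
  have key4 : ∀ (i j k l : ℕ), i ≠ j → i ≠ k → i ≠ l → j ≠ k → j ≠ l → k ≠ l →
      ∀ (F : (E × E) × (E × E) → ℝ), Measurable F →
      ∫ ω, F ((Y i ω, Y j ω), (Y k ω, Y l ω)) ∂P = ∫ p, F p ∂((ν.prod ν).prod (ν.prod ν)) := by
    intro i j k l h1 h2 h3 h4 h5 h6 F hF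
    rw [← law4 i j k l h1 h2 h3 h4 h5 h6,
      integral_map (((hYmeas i).prodMk (hYmeas j)).prodMk
        ((hYmeas k).prodMk (hYmeas l))).aemeasurable hF.aestronglyMeasurable]
  -- g as integral over ν
  have hgν : ∀ y, g y = ∫ x, h y x ∂ν := by
    intro y
    rw [hg y, ← hYlaw 0]
    exact (integral_map (hYmeas 0).aemeasurable
      ((hmeas.comp measurable_prodMk_left).aestronglyMeasurable (μ := P.map (Y 0)))).symm
  have hgm : Measurable g := by
    have : g = fun y => ∫ x, h y x ∂ν := funext hgν
    rw [this]
    exact (StronglyMeasurable.integral_prod_right hmeas.stronglyMeasurable).measurable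
  have hgb : ∀ y, |g y| ≤ C₀ := fun y => by
    rw [hg y]; exact abs_integral_le_of_bdd _ (fun ω => hC₀ y (Y 0 ω))
  have hθb : |θ| ≤ C₀ := by
    rw [hθ]; exact abs_integral_le_of_bdd _ (fun ω => hC₀ _ _)
  -- integrability of h-sections
  have ihx : ∀ x, Integrable (fun y => h x y) ν := fun x =>
    integrable_of_bdd (hmeas.comp measurable_prodMk_left).aestronglyMeasurable (hC₀ x)
  have ihp : Integrable (fun p : E × E => h p.1 p.2) (ν.prod ν) :=
    integrable_of_bdd (hmeas.comp (measurable_fst.prodMk measurable_snd)).aestronglyMeasurable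
      (fun p => hC₀ _ _)
  have igh : Integrable g ν := integrable_of_bdd hgm.aestronglyMeasurable hgb
  -- mean of g is θ
  have hEg : ∫ x, g x ∂ν = θ := by
    have h1 : ∫ x, g x ∂ν = ∫ x, ∫ y, h x y ∂ν ∂ν :=
      integral_congr_ae (ae_of_all _ fun x => hgν x)
    rw [h1, ← integral_prod _ ihp]
    rw [hθ, key2 0 1 (by norm_num) (fun p => h p.1 p.2)
      (hmeas.comp (measurable_fst.prodMk measurable_snd))]
  -- the centered kernel
  set k : E → E → ℝ := fun x y => h x y + θ - g x - g y with hkdef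
  have hkb : ∀ x y, |k x y| ≤ 4 * C₀ := by
    intro x y
    have h1 : |h x y + θ - g x - g y| ≤ |h x y + θ - g x| + |g y| := abs_sub _ _
    have h2 : |h x y + θ - g x| ≤ |h x y + θ| + |g x| := abs_sub _ _
    have h3 : |h x y + θ| ≤ |h x y| + |θ| := abs_add_le _ _
    have : |k x y| = |h x y + θ - g x - g y| := rfl
    rw [this]
    have := hC₀ x y; have := hgb x; have := hgb y
    linarith
  have hkm : Measurable (fun p : E × E => k p.1 p.2) := by
    simp only [hkdef]
    exact (((hmeas.comp (measurable_fst.prodMk measurable_snd)).add measurable_const).sub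
      (hgm.comp measurable_fst)).sub (hgm.comp measurable_snd)
  have hksymm : ∀ x y, k x y = k y x := by
    intro x y; simp only [hkdef]; rw [hsymm x y]; ring
  have hkx : ∀ x, Integrable (fun y => k x y) ν := fun x =>
    integrable_of_bdd (hkm.comp (measurable_const.prodMk measurable_id)).aestronglyMeasurable
      (hkb x)
  have hk0 : ∀ x, ∫ y, k x y ∂ν = 0 := by
    intro x
    have i1 : Integrable (fun y => h x y + θ) ν := (ihx x).add (integrable_const θ)
    have i2 : Integrable (fun y => h x y + θ - g x) ν := i1.sub (integrable_const (g x))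
    show ∫ y, (h x y + θ - g x) - g y ∂ν = 0
    rw [integral_sub i2 igh, integral_sub i1 (integrable_const (g x)),
      integral_add (ihx x) (integrable_const θ), ← hgν x, hEg, integral_const, integral_const]
    simp
  have hkapp : ∀ x y, k x y = h x y + θ - g x - g y := fun _ _ => rfl
  have hkx : ∀ x, Integrable (fun y => k x y) ν := fun x =>
    integrable_of_bdd (hkm.comp (measurable_const.prodMk measurable_id)).aestronglyMeasurable
      (hkb x)
  have hkint : Integrable (fun p : E × E => k p.1 p.2) (ν.prod ν) :=
    integrable_of_bdd hkm.aestronglyMeasurable (fun p => hkb _ _)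
  have hkint0 : ∫ p : E × E, k p.1 p.2 ∂(ν.prod ν) = 0 := by
    calc ∫ p : E × E, k p.1 p.2 ∂(ν.prod ν) = ∫ x, ∫ y, k x y ∂ν ∂ν := integral_prod _ hkint
      _ = ∫ x, (0:ℝ) ∂ν := integral_congr_ae (ae_of_all _ fun x => hk0 x)
      _ = 0 := integral_zero _ _
  -- variance identities
  have hMem2 : MemLp (fun ω => h (Y 0 ω) (Y 1 ω)) 2 P :=
    MemLp.of_bound ((hmeas.comp ((hYmeas 0).prodMk (hYmeas 1))).aestronglyMeasurable) C₀
      (ae_of_all _ fun ω => by simpa [Real.norm_eq_abs] using hC₀ (Y 0 ω) (Y 1 ω))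
  have hσ₂' : ∫ p : E × E, (h p.1 p.2 - θ) ^ 2 ∂(ν.prod ν) = σ₂sq := by
    have hveq : variance (fun ω => h (Y 0 ω) (Y 1 ω)) P
        = ∫ ω, (h (Y 0 ω) (Y 1 ω) - θ) ^ 2 ∂P := by
      rw [variance_eq_integral hMem2.aestronglyMeasurable.aemeasurable]
      exact integral_congr_ae (ae_of_all _ fun ω => by simp [← hθ])
    rw [hσ₂, hveq]
    exact (key2 0 1 (by norm_num) (fun p => (h p.1 p.2 - θ) ^ 2)
      (((hmeas.comp (measurable_fst.prodMk measurable_snd)).sub measurable_const).pow_const 2)).symm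
  have hMem1 : MemLp (fun ω => g (Y 0 ω)) 2 P :=
    MemLp.of_bound ((hgm.comp (hYmeas 0)).aestronglyMeasurable) C₀
      (ae_of_all _ fun ω => by simpa [Real.norm_eq_abs] using hgb (Y 0 ω))
  have hEgY : ∫ ω, g (Y 0 ω) ∂P = θ := by rw [key1 0 g hgm, hEg]
  have hσ₁' : ∫ x, (g x - θ) ^ 2 ∂ν = σ₁sq := by
    have hveq : variance (fun ω => g (Y 0 ω)) P = ∫ ω, (g (Y 0 ω) - θ) ^ 2 ∂P := by
      rw [variance_eq_integral hMem1.aestronglyMeasurable.aemeasurable]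
      exact integral_congr_ae (ae_of_all _ fun ω => by simp [hEgY])
    rw [hσ₁, hveq]
    exact (key1 0 (fun x => (g x - θ) ^ 2) ((hgm.sub measurable_const).pow_const 2)).symm
  -- integrability on the square
  have mA : Measurable (fun p : E × E => h p.1 p.2 - θ) :=
    (hmeas.comp (measurable_fst.prodMk measurable_snd)).sub measurable_const
  have mB : Measurable (fun p : E × E => g p.1 - θ) :=
    (hgm.comp measurable_fst).sub measurable_const
  have mC : Measurable (fun p : E × E => g p.2 - θ) :=
    (hgm.comp measurable_snd).sub measurable_const
  have bA : ∀ p : E × E, |h p.1 p.2 - θ| ≤ 2 * C₀ := fun p => by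
    have := abs_sub (h p.1 p.2) θ; have := hC₀ p.1 p.2; linarith
  have bB : ∀ p : E × E, |g p.1 - θ| ≤ 2 * C₀ := fun p => by
    have := abs_sub (g p.1) θ; have := hgb p.1; linarith
  have bC : ∀ p : E × E, |g p.2 - θ| ≤ 2 * C₀ := fun p => by
    have := abs_sub (g p.2) θ; have := hgb p.2; linarith
  have iA2 : Integrable (fun p : E × E => (h p.1 p.2 - θ) ^ 2) (ν.prod ν) :=
    integrable_of_bdd (mA.pow_const 2).aestronglyMeasurable (fun p => abs_sq_le (bA p))
  have iB2 : Integrable (fun p : E × E => (g p.1 - θ) ^ 2) (ν.prod ν) :=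
    integrable_of_bdd (mB.pow_const 2).aestronglyMeasurable (fun p => abs_sq_le (bB p))
  have iC2 : Integrable (fun p : E × E => (g p.2 - θ) ^ 2) (ν.prod ν) :=
    integrable_of_bdd (mC.pow_const 2).aestronglyMeasurable (fun p => abs_sq_le (bC p))
  have iAB : Integrable (fun p : E × E => (h p.1 p.2 - θ) * (g p.1 - θ)) (ν.prod ν) :=
    integrable_of_bdd (mA.mul mB).aestronglyMeasurable (fun p => abs_mul_le (bA p) (bB p))
  have iAC : Integrable (fun p : E × E => (h p.1 p.2 - θ) * (g p.2 - θ)) (ν.prod ν) :=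
    integrable_of_bdd (mA.mul mC).aestronglyMeasurable (fun p => abs_mul_le (bA p) (bC p))
  have iBC : Integrable (fun p : E × E => (g p.1 - θ) * (g p.2 - θ)) (ν.prod ν) :=
    integrable_of_bdd (mB.mul mC).aestronglyMeasurable (fun p => abs_mul_le (bB p) (bC p))
  -- values of the six integrals
  have hG0 : ∫ x, (g x - θ) ∂ν = 0 := by
    rw [integral_sub igh (integrable_const θ), hEg, integral_const]; simp
  have vB2 : ∫ p : E × E, (g p.1 - θ) ^ 2 ∂(ν.prod ν) = σ₁sq := by
    calc ∫ p : E × E, (g p.1 - θ) ^ 2 ∂(ν.prod ν)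
        = ∫ p : E × E, (fun x => (g x - θ) ^ 2) p.1 * (fun _ => (1:ℝ)) p.2 ∂(ν.prod ν) := by
          simp
      _ = (∫ x, (g x - θ) ^ 2 ∂ν) * ∫ _y, (1:ℝ) ∂ν :=
          integral_prod_mul (fun x => (g x - θ) ^ 2) (fun _ => (1:ℝ))
      _ = σ₁sq := by simp [hσ₁']
  have vC2 : ∫ p : E × E, (g p.2 - θ) ^ 2 ∂(ν.prod ν) = σ₁sq := by
    calc ∫ p : E × E, (g p.2 - θ) ^ 2 ∂(ν.prod ν)
        = ∫ p : E × E, (fun _ => (1:ℝ)) p.1 * (fun y => (g y - θ) ^ 2) p.2 ∂(ν.prod ν) := by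
          simp
      _ = (∫ _x, (1:ℝ) ∂ν) * ∫ y, (g y - θ) ^ 2 ∂ν :=
          integral_prod_mul (fun _ => (1:ℝ)) (fun y => (g y - θ) ^ 2)
      _ = σ₁sq := by simp [hσ₁']
  have vBC : ∫ p : E × E, (g p.1 - θ) * (g p.2 - θ) ∂(ν.prod ν) = 0 := by
    calc ∫ p : E × E, (g p.1 - θ) * (g p.2 - θ) ∂(ν.prod ν)
        = (∫ x, (g x - θ) ∂ν) * ∫ y, (g y - θ) ∂ν :=
          integral_prod_mul (fun x => g x - θ) (fun y => g y - θ)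
      _ = 0 := by rw [hG0]; ring
  have vAB : ∫ p : E × E, (h p.1 p.2 - θ) * (g p.1 - θ) ∂(ν.prod ν) = σ₁sq := by
    have inner : ∀ x, ∫ y, (h x y - θ) * (g x - θ) ∂ν = (g x - θ) ^ 2 := by
      intro x
      rw [integral_mul_const, integral_sub (ihx x) (integrable_const θ), ← hgν x, integral_const]
      simp [sq]
    calc ∫ p : E × E, (h p.1 p.2 - θ) * (g p.1 - θ) ∂(ν.prod ν)
        = ∫ x, ∫ y, (h x y - θ) * (g x - θ) ∂ν ∂ν := integral_prod _ iAB
      _ = ∫ x, (g x - θ) ^ 2 ∂ν := integral_congr_ae (ae_of_all _ inner)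
      _ = σ₁sq := hσ₁'
  have hgswap : ∀ y, ∫ x, h x y ∂ν = g y := by
    intro y
    calc ∫ x, h x y ∂ν = ∫ x, h y x ∂ν := integral_congr_ae (ae_of_all _ fun x => hsymm x y)
      _ = g y := (hgν y).symm
  have ihy : ∀ y, Integrable (fun x => h x y) ν := fun y =>
    integrable_of_bdd (hmeas.comp (measurable_id.prodMk measurable_const)).aestronglyMeasurable
      (fun x => hC₀ x y)
  have vAC : ∫ p : E × E, (h p.1 p.2 - θ) * (g p.2 - θ) ∂(ν.prod ν) = σ₁sq := by
    have inner : ∀ y, ∫ x, (h x y - θ) * (g y - θ) ∂ν = (g y - θ) ^ 2 := by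
      intro y
      rw [integral_mul_const, integral_sub (ihy y) (integrable_const θ), hgswap y, integral_const]
      simp [sq]
    calc ∫ p : E × E, (h p.1 p.2 - θ) * (g p.2 - θ) ∂(ν.prod ν)
        = ∫ y, ∫ x, (h x y - θ) * (g y - θ) ∂ν ∂ν := integral_prod_symm _ iAC
      _ = ∫ y, (g y - θ) ^ 2 ∂ν := integral_congr_ae (ae_of_all _ inner)
      _ = σ₁sq := hσ₁'
  -- the key second-moment identity
  have j1 : Integrable (fun p : E × E => (h p.1 p.2 - θ) ^ 2 + (g p.1 - θ) ^ 2) (ν.prod ν) :=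
    iA2.add iB2
  have j2 : Integrable (fun p : E × E =>
      (h p.1 p.2 - θ) ^ 2 + (g p.1 - θ) ^ 2 + (g p.2 - θ) ^ 2) (ν.prod ν) := j1.add iC2
  have j3 : Integrable (fun p : E × E =>
      (h p.1 p.2 - θ) ^ 2 + (g p.1 - θ) ^ 2 + (g p.2 - θ) ^ 2
        - 2 * ((h p.1 p.2 - θ) * (g p.1 - θ))) (ν.prod ν) := j2.sub (iAB.const_mul 2)
  have j4 : Integrable (fun p : E × E =>
      (h p.1 p.2 - θ) ^ 2 + (g p.1 - θ) ^ 2 + (g p.2 - θ) ^ 2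
        - 2 * ((h p.1 p.2 - θ) * (g p.1 - θ))
        - 2 * ((h p.1 p.2 - θ) * (g p.2 - θ))) (ν.prod ν) := j3.sub (iAC.const_mul 2)
  have L3 : ∫ p : E × E, (k p.1 p.2) ^ 2 ∂(ν.prod ν) = σ₂sq - 2 * σ₁sq := by
    have hexp : ∀ p : E × E, (k p.1 p.2) ^ 2 =
        (h p.1 p.2 - θ) ^ 2 + (g p.1 - θ) ^ 2 + (g p.2 - θ) ^ 2
          - 2 * ((h p.1 p.2 - θ) * (g p.1 - θ))
          - 2 * ((h p.1 p.2 - θ) * (g p.2 - θ))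
          + 2 * ((g p.1 - θ) * (g p.2 - θ)) := fun p => by rw [hkapp]; ring
    rw [integral_congr_ae (ae_of_all _ hexp), integral_add j4 (iBC.const_mul 2),
      integral_sub j3 (iAC.const_mul 2), integral_sub j2 (iAB.const_mul 2),
      integral_add j1 iC2, integral_add iA2 iB2, integral_const_mul, integral_const_mul,
      integral_const_mul, hσ₂', vB2, vC2, vAB, vAC, vBC]
    ring
  -- P-level moment lemmas
  have hkYm : ∀ i j : ℕ, Measurable (fun ω => k (Y i ω) (Y j ω)) := fun i j =>
    hkm.comp ((hYmeas i).prodMk (hYmeas j))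
  have L3P : ∀ i j : ℕ, i ≠ j → ∫ ω, (k (Y i ω) (Y j ω)) ^ 2 ∂P = σ₂sq - 2 * σ₁sq :=
    fun i j hij => (key2 i j hij (fun p => (k p.1 p.2) ^ 2) (hkm.pow_const 2)).trans L3
  have L1P : ∀ a b c : ℕ, a ≠ b → a ≠ c → b ≠ c →
      ∫ ω, k (Y a ω) (Y b ω) * k (Y a ω) (Y c ω) ∂P = 0 := by
    intro a b c hab hac hbc
    have mF : Measurable (fun q : E × (E × E) => k q.1 q.2.1 * k q.1 q.2.2) :=
      (hkm.comp (measurable_fst.prodMk (measurable_fst.comp measurable_snd))).mul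
        (hkm.comp (measurable_fst.prodMk (measurable_snd.comp measurable_snd)))
    have iq : Integrable (fun q : E × (E × E) => k q.1 q.2.1 * k q.1 q.2.2)
        (ν.prod (ν.prod ν)) :=
      integrable_of_bdd mF.aestronglyMeasurable
        (fun q => abs_mul_le (hkb _ _) (hkb _ _))
    have inner : ∀ x, ∫ q : E × E, k x q.1 * k x q.2 ∂(ν.prod ν) = 0 := by
      intro x
      calc ∫ q : E × E, k x q.1 * k x q.2 ∂(ν.prod ν)
          = (∫ y, k x y ∂ν) * ∫ y, k x y ∂ν :=
            integral_prod_mul (fun y => k x y) (fun y => k x y)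
        _ = 0 := by rw [hk0 x]; ring
    calc ∫ ω, k (Y a ω) (Y b ω) * k (Y a ω) (Y c ω) ∂P
        = ∫ q : E × (E × E), k q.1 q.2.1 * k q.1 q.2.2 ∂(ν.prod (ν.prod ν)) :=
          key3 a b c hab hac hbc _ mF
      _ = ∫ x, ∫ q : E × E, k x q.1 * k x q.2 ∂(ν.prod ν) ∂ν := integral_prod _ iq
      _ = ∫ x, (0:ℝ) ∂ν := integral_congr_ae (ae_of_all _ inner)
      _ = 0 := integral_zero _ _
  have L2P : ∀ a b c d : ℕ, a ≠ b → a ≠ c → a ≠ d → b ≠ c → b ≠ d → c ≠ d →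
      ∫ ω, k (Y a ω) (Y b ω) * k (Y c ω) (Y d ω) ∂P = 0 := by
    intro a b c d h1 h2 h3 h4 h5 h6
    have mF : Measurable (fun q : (E × E) × (E × E) => k q.1.1 q.1.2 * k q.2.1 q.2.2) :=
      (hkm.comp ((measurable_fst.comp measurable_fst).prodMk
        (measurable_snd.comp measurable_fst))).mul
        (hkm.comp ((measurable_fst.comp measurable_snd).prodMk
          (measurable_snd.comp measurable_snd)))
    calc ∫ ω, k (Y a ω) (Y b ω) * k (Y c ω) (Y d ω) ∂P
        = ∫ q : (E × E) × (E × E), k q.1.1 q.1.2 * k q.2.1 q.2.2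
            ∂((ν.prod ν).prod (ν.prod ν)) := key4 a b c d h1 h2 h3 h4 h5 h6 _ mF
      _ = (∫ p : E × E, k p.1 p.2 ∂(ν.prod ν)) * ∫ p : E × E, k p.1 p.2 ∂(ν.prod ν) :=
          integral_prod_mul (fun p : E × E => k p.1 p.2) (fun p : E × E => k p.1 p.2)
      _ = 0 := by rw [hkint0]; ring
  have hE : ∀ i m j l : ℕ, i < m → j < l →
      ∫ ω, k (Y i ω) (Y m ω) * k (Y j ω) (Y l ω) ∂P
        = if j = i ∧ l = m then σ₂sq - 2 * σ₁sq else 0 := by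
    intro i m j l him hjl
    by_cases h1 : j = i ∧ l = m
    · obtain ⟨rfl, rfl⟩ := h1
      rw [if_pos ⟨rfl, rfl⟩]
      calc ∫ ω, k (Y j ω) (Y l ω) * k (Y j ω) (Y l ω) ∂P
          = ∫ ω, (k (Y j ω) (Y l ω)) ^ 2 ∂P :=
            integral_congr_ae (ae_of_all _ fun ω => (pow_two _).symm)
        _ = σ₂sq - 2 * σ₁sq := L3P j l him.ne
    · rw [if_neg h1]
      by_cases hji : j = i
      · subst hji
        exact L1P j m l him.ne hjl.ne (fun hml => h1 ⟨rfl, hml.symm⟩)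
      · by_cases hlm : l = m
        · subst hlm
          calc ∫ ω, k (Y i ω) (Y l ω) * k (Y j ω) (Y l ω) ∂P
              = ∫ ω, k (Y l ω) (Y i ω) * k (Y l ω) (Y j ω) ∂P :=
                integral_congr_ae (ae_of_all _ fun ω => by
                  simp only [hksymm (Y i ω) (Y l ω), hksymm (Y j ω) (Y l ω)])
            _ = 0 := L1P l i j him.ne' hjl.ne' (fun hij => hji hij.symm)
        · by_cases hil : i = l
          · subst hil
            calc ∫ ω, k (Y i ω) (Y m ω) * k (Y j ω) (Y i ω) ∂P
                = ∫ ω, k (Y i ω) (Y m ω) * k (Y i ω) (Y j ω) ∂P :=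
                  integral_congr_ae (ae_of_all _ fun ω => by
                    simp only [hksymm (Y j ω) (Y i ω)])
              _ = 0 := L1P i m j him.ne (Ne.symm hji) (hjl.trans him).ne'
          · by_cases hmj : m = j
            · subst hmj
              calc ∫ ω, k (Y i ω) (Y m ω) * k (Y m ω) (Y l ω) ∂P
                  = ∫ ω, k (Y m ω) (Y i ω) * k (Y m ω) (Y l ω) ∂P :=
                    integral_congr_ae (ae_of_all _ fun ω => by
                      simp only [hksymm (Y i ω) (Y m ω)])
                _ = 0 := L1P m i l him.ne' hjl.ne (him.trans hjl).ne
            · exact L2P i m j l him.ne (Ne.symm hji) hil hmj (fun e => hlm e.symm) hjl.ne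
  have hFij : ∀ i m j l : ℕ, Integrable (fun ω => k (Y i ω) (Y m ω) * k (Y j ω) (Y l ω)) P :=
    fun i m j l => integrable_of_bdd ((hkYm i m).mul (hkYm j l)).aestronglyMeasurable
      (fun ω => abs_mul_le (hkb _ _) (hkb _ _))
  have main : ∀ n : ℕ, 2 ≤ n →
      (∫ ω, (U n ω - θ - (n : ℝ)⁻¹ * ∑ i ∈ Finset.range n, ψ (Y i ω)) ^ 2 ∂P) =
        2 * (σ₂sq - 2 * σ₁sq) / ((n : ℝ) * ((n : ℝ) - 1)) ∧
      (∫ ω, (Real.sqrt n * (U n ω - θ) -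
          (Real.sqrt n)⁻¹ * ∑ i ∈ Finset.range n, ψ (Y i ω)) ^ 2 ∂P) =
        2 * (σ₂sq - 2 * σ₁sq) / ((n : ℝ) - 1) := by
    intro n hn
    have h2n : (2:ℝ) ≤ (n:ℝ) := by exact_mod_cast hn
    have hn0 : (n:ℝ) ≠ 0 := by linarith
    have hn1 : (n:ℝ) - 1 ≠ 0 := by intro e; rw [sub_eq_zero] at e; linarith [e]
    have hc : (n.choose 2 : ℝ) = (n:ℝ) * ((n:ℝ) - 1) / 2 := choose_two_cast n hn
    have hcne : (n.choose 2 : ℝ) ≠ 0 := by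
      rw [hc]; intro e
      have : (n:ℝ) * ((n:ℝ) - 1) = 0 := by linarith [e]
      rcases mul_eq_zero.mp this with e1 | e1
      · exact hn0 e1
      · exact hn1 e1
    -- the second moment of the double sum
    have I1 : ∀ m l : ℕ, Integrable (fun ω => ∑ i ∈ range m, ∑ j ∈ range l,
        k (Y i ω) (Y m ω) * k (Y j ω) (Y l ω)) P := fun m l =>
      integrable_finset_sum _ (fun i _ => integrable_finset_sum _ (fun j _ => hFij i m j l))
    have I2 : ∀ m : ℕ, Integrable (fun ω => ∑ l ∈ range n, ∑ i ∈ range m, ∑ j ∈ range l,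
        k (Y i ω) (Y m ω) * k (Y j ω) (Y l ω)) P := fun m =>
      integrable_finset_sum _ (fun l _ => I1 m l)
    have hSsq : ∫ ω, (∑ m ∈ range n, ∑ i ∈ range m, k (Y i ω) (Y m ω)) ^ 2 ∂P
        = (n.choose 2 : ℝ) * (σ₂sq - 2 * σ₁sq) := by
      have expand : ∀ ω : Ω, (∑ m ∈ range n, ∑ i ∈ range m, k (Y i ω) (Y m ω)) ^ 2
          = ∑ m ∈ range n, ∑ l ∈ range n, ∑ i ∈ range m, ∑ j ∈ range l,
              k (Y i ω) (Y m ω) * k (Y j ω) (Y l ω) := by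
        intro ω
        rw [pow_two, Finset.sum_mul_sum]
        refine Finset.sum_congr rfl fun m _ => Finset.sum_congr rfl fun l _ => ?_
        rw [Finset.sum_mul_sum]
      calc ∫ ω, (∑ m ∈ range n, ∑ i ∈ range m, k (Y i ω) (Y m ω)) ^ 2 ∂P
          = ∫ ω, ∑ m ∈ range n, ∑ l ∈ range n, ∑ i ∈ range m, ∑ j ∈ range l,
              k (Y i ω) (Y m ω) * k (Y j ω) (Y l ω) ∂P :=
            integral_congr_ae (ae_of_all _ expand)
        _ = ∑ m ∈ range n, ∑ l ∈ range n, ∑ i ∈ range m, ∑ j ∈ range l,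
              ∫ ω, k (Y i ω) (Y m ω) * k (Y j ω) (Y l ω) ∂P := by
            rw [integral_finset_sum _ (fun m _ => I2 m)]
            refine Finset.sum_congr rfl fun m _ => ?_
            rw [integral_finset_sum _ (fun l _ => I1 m l)]
            refine Finset.sum_congr rfl fun l _ => ?_
            rw [integral_finset_sum _ (fun i _ =>
              integrable_finset_sum _ (fun j _ => hFij i m j l))]
            refine Finset.sum_congr rfl fun i _ => ?_
            rw [integral_finset_sum _ (fun j _ => hFij i m j l)]
        _ = ∑ m ∈ range n, ∑ l ∈ range n, ∑ i ∈ range m, ∑ j ∈ range l,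
              (if j = i ∧ l = m then σ₂sq - 2 * σ₁sq else 0) := by
            refine Finset.sum_congr rfl fun m _ => Finset.sum_congr rfl fun l _ =>
              Finset.sum_congr rfl fun i hi => Finset.sum_congr rfl fun j hj => ?_
            exact hE i m j l (mem_range.mp hi) (mem_range.mp hj)
        _ = ∑ m ∈ range n, (m : ℝ) * (σ₂sq - 2 * σ₁sq) := by
            refine Finset.sum_congr rfl fun m hm => ?_
            have inner2 : ∀ l : ℕ, ∑ i ∈ range m, ∑ j ∈ range l,
                (if j = i ∧ l = m then σ₂sq - 2 * σ₁sq else 0)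
                = if l = m then (l : ℝ) * (σ₂sq - 2 * σ₁sq) else 0 := by
              intro l
              by_cases hlm : l = m
              · subst hlm
                rw [if_pos rfl]
                have e1 : ∀ i ∈ range l, ∑ j ∈ range l,
                    (if j = i ∧ l = l then σ₂sq - 2 * σ₁sq else 0) = σ₂sq - 2 * σ₁sq := by
                  intro i hi
                  simp only [and_true]
                  rw [Finset.sum_ite_eq' (range l) i (fun _ => σ₂sq - 2 * σ₁sq), if_pos hi]
                rw [Finset.sum_congr rfl e1, Finset.sum_const, Finset.card_range, nsmul_eq_mul]
              · rw [if_neg hlm]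
                refine Finset.sum_eq_zero fun i _ => Finset.sum_eq_zero fun j _ => ?_
                simp [hlm]
            rw [Finset.sum_congr rfl (fun l _ => inner2 l),
              Finset.sum_ite_eq' (range n) m (fun l => (l : ℝ) * (σ₂sq - 2 * σ₁sq)), if_pos hm]
        _ = (n.choose 2 : ℝ) * (σ₂sq - 2 * σ₁sq) := by
            rw [← Finset.sum_mul, sum_range_id_cast]
    -- decomposition of the centered U-statistic
    have hψs : ∀ ω : Ω, ∑ i ∈ range n, ψ (Y i ω)
        = 2 * (∑ i ∈ range n, g (Y i ω)) - 2 * (n : ℝ) * θ := by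
      intro ω
      rw [Finset.sum_congr rfl (fun i _ => hψ (Y i ω)), ← Finset.mul_sum,
        Finset.sum_sub_distrib, Finset.sum_const, Finset.card_range, nsmul_eq_mul]
      ring
    have hsum_k : ∀ ω : Ω, ∑ m ∈ range n, ∑ i ∈ range m, k (Y i ω) (Y m ω)
        = (∑ m ∈ range n, ∑ i ∈ range m, h (Y i ω) (Y m ω)) + (n.choose 2 : ℝ) * θ
          - ((n : ℝ) - 1) * ∑ i ∈ range n, g (Y i ω) := by
      intro ω
      have e1 : ∀ m i : ℕ, k (Y i ω) (Y m ω)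
          = (h (Y i ω) (Y m ω) + θ) - (g (Y i ω) + g (Y m ω)) := by
        intro m i; rw [hkapp]; ring
      rw [Finset.sum_congr rfl fun m _ => Finset.sum_congr rfl fun i _ => e1 m i]
      rw [Finset.sum_congr rfl fun m _ => Finset.sum_sub_distrib _ _, Finset.sum_sub_distrib]
      rw [sum_pairs (fun i => g (Y i ω)) n]
      rw [Finset.sum_congr rfl fun m (_ : m ∈ range n) => Finset.sum_add_distrib,
        Finset.sum_add_distrib]
      have e2 : ∑ m ∈ range n, ∑ _i ∈ range m, θ = (n.choose 2 : ℝ) * θ := by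
        simp only [Finset.sum_const, Finset.card_range, nsmul_eq_mul]
        rw [← Finset.sum_mul, sum_range_id_cast]
      rw [e2]
    have hDecomp : ∀ ω : Ω, U n ω - θ - (n : ℝ)⁻¹ * ∑ i ∈ range n, ψ (Y i ω)
        = (n.choose 2 : ℝ)⁻¹ * ∑ m ∈ range n, ∑ i ∈ range m, k (Y i ω) (Y m ω) := by
      intro ω
      rw [hU n ω, hsum_k ω, hψs ω, hc]
      field_simp
      ring
    have first : (∫ ω, (U n ω - θ - (n : ℝ)⁻¹ * ∑ i ∈ Finset.range n, ψ (Y i ω)) ^ 2 ∂P) =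
        2 * (σ₂sq - 2 * σ₁sq) / ((n : ℝ) * ((n : ℝ) - 1)) := by
      calc ∫ ω, (U n ω - θ - (n : ℝ)⁻¹ * ∑ i ∈ Finset.range n, ψ (Y i ω)) ^ 2 ∂P
          = ∫ ω, ((n.choose 2 : ℝ)⁻¹) ^ 2
              * (∑ m ∈ range n, ∑ i ∈ range m, k (Y i ω) (Y m ω)) ^ 2 ∂P :=
            integral_congr_ae (ae_of_all _ fun ω => by
              simp only [hDecomp ω, mul_pow])
        _ = ((n.choose 2 : ℝ)⁻¹) ^ 2
              * ∫ ω, (∑ m ∈ range n, ∑ i ∈ range m, k (Y i ω) (Y m ω)) ^ 2 ∂P :=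
            integral_const_mul _ _
        _ = ((n.choose 2 : ℝ)⁻¹) ^ 2 * ((n.choose 2 : ℝ) * (σ₂sq - 2 * σ₁sq)) := by
            rw [hSsq]
        _ = 2 * (σ₂sq - 2 * σ₁sq) / ((n : ℝ) * ((n : ℝ) - 1)) := by
            rw [hc]; field_simp
    refine ⟨first, ?_⟩
    have hnn : (0:ℝ) ≤ (n:ℝ) := Nat.cast_nonneg n
    have hs : Real.sqrt n * Real.sqrt n = (n:ℝ) := Real.mul_self_sqrt hnn
    have hsne : Real.sqrt n ≠ 0 := by
      have : (0:ℝ) < Real.sqrt n := Real.sqrt_pos.mpr (by linarith)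
      exact this.ne'
    have hinv : (Real.sqrt n)⁻¹ = Real.sqrt n * (n:ℝ)⁻¹ := by
      field_simp
      exact (Real.sq_sqrt hnn).symm
    have hsq : ∀ ω : Ω, (Real.sqrt n * (U n ω - θ) -
        (Real.sqrt n)⁻¹ * ∑ i ∈ Finset.range n, ψ (Y i ω)) ^ 2
        = (n : ℝ) * (U n ω - θ - (n : ℝ)⁻¹ * ∑ i ∈ Finset.range n, ψ (Y i ω)) ^ 2 := by
      intro ω
      rw [hinv, show Real.sqrt n * (U n ω - θ)
          - Real.sqrt n * (n:ℝ)⁻¹ * ∑ i ∈ Finset.range n, ψ (Y i ω)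
          = Real.sqrt n * (U n ω - θ - (n : ℝ)⁻¹ * ∑ i ∈ Finset.range n, ψ (Y i ω)) by ring,
        mul_pow, Real.sq_sqrt hnn]
    calc ∫ ω, (Real.sqrt n * (U n ω - θ) -
          (Real.sqrt n)⁻¹ * ∑ i ∈ Finset.range n, ψ (Y i ω)) ^ 2 ∂P
        = ∫ ω, (n : ℝ) * (U n ω - θ - (n : ℝ)⁻¹ * ∑ i ∈ Finset.range n, ψ (Y i ω)) ^ 2 ∂P :=
          integral_congr_ae (ae_of_all _ hsq)
      _ = (n : ℝ) * ∫ ω, (U n ω - θ - (n : ℝ)⁻¹ * ∑ i ∈ Finset.range n, ψ (Y i ω)) ^ 2 ∂P :=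
          integral_const_mul _ _
      _ = (n : ℝ) * (2 * (σ₂sq - 2 * σ₁sq) / ((n : ℝ) * ((n : ℝ) - 1))) := by rw [first]
      _ = 2 * (σ₂sq - 2 * σ₁sq) / ((n : ℝ) - 1) := by
          field_simp
  refine ⟨main, ?_⟩
  have hev : (fun n : ℕ => 2 * (σ₂sq - 2 * σ₁sq) / ((n : ℝ) - 1)) =ᶠ[atTop]
      (fun n : ℕ => ∫ ω, (Real.sqrt n * (U n ω - θ) -
          (Real.sqrt n)⁻¹ * ∑ i ∈ Finset.range n, ψ (Y i ω)) ^ 2 ∂P) :=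
    eventually_atTop.2 ⟨2, fun n hn => ((main n hn).2).symm⟩
  have hlim : Tendsto (fun n : ℕ => 2 * (σ₂sq - 2 * σ₁sq) / ((n : ℝ) - 1)) atTop (nhds 0) :=
    Tendsto.div_atTop tendsto_const_nhds
      (tendsto_atTop_add_const_right _ (-1) tendsto_natCast_atTop_atTop)
  exact hlim.congr' hev
end

section
/- Let K ≥ 1, let Y be a random variable with values in {1,…,K}, and let Z₁, Z₂ be i.i.d. random variables with values in {1,…,K}, with Y, Z₁, Z₂ mutually independent. With φ(y,y') = 1{y < y'} + (1/2)·1{y = y'}, p₁(j) = P(Y = j), p₂(j) = P(Z₁ = j), and D = E[φ(Y,Z₁)], the covariance with a shared treated observation satisfies Cov(φ(Y,Z₁), φ(Y,Z₂)) = Σ_{j=1}^{K−1} p₁(j)·(Σ_{l=j}^{K} p₂(l))·(Σ_{l=j+1}^{K} p₂(l)) + (1/4) Σ_{j=1}^{K} p₁(j)·p₂(j)² − D². -/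
open MeasureTheory ProbabilityTheory Finset

/-- The DOOR win/tie kernel on ranks. -/
noncomputable def doorPhi (y y' : ℕ) : ℝ :=
  (if y < y' then (1 : ℝ) else 0) + (if y = y' then (1 : ℝ) else 0) / 2

/-- Covariance of two real-valued random variables under the measure `P`. -/
noncomputable def cov {Ω : Type*} [MeasurableSpace Ω] (P : Measure Ω) (f g : Ω → ℝ) : ℝ :=
  ∫ ω, (f ω - ∫ ω', f ω' ∂P) * (g ω - ∫ ω', g ω' ∂P) ∂P

/-- For `Y` with values in `{1,…,K}` and i.i.d. `Z₁, Z₂` with values in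
`{1,…,K}`, with `Y, Z₁, Z₂` mutually independent, `p₁(j) = P(Y=j)`, `p₂(j) = P(Z₁=j)`, and
`D = E[φ(Y,Z₁)]`, the covariance with a shared treated observation satisfies
`Cov(φ(Y,Z₁), φ(Y,Z₂)) = ∑_{j=1}^{K−1} p₁(j)(∑_{l=j}^{K} p₂(l))(∑_{l=j+1}^{K} p₂(l))
  + (1/4)∑_{j=1}^{K} p₁(j) p₂(j)² − D²`. -/
theorem door_covariance_shared_treated
    {Ω : Type*} [MeasurableSpace Ω] (P : Measure Ω) [IsProbabilityMeasure P]
    (K : ℕ) (hK : 1 ≤ K)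
    (Y Z₁ Z₂ : Ω → ℕ)
    (hY : Measurable Y) (hZ₁ : Measurable Z₁) (hZ₂ : Measurable Z₂)
    (hYrange : ∀ ω, Y ω ∈ Finset.Icc 1 K)
    (hZ₁range : ∀ ω, Z₁ ω ∈ Finset.Icc 1 K)
    (hZ₂range : ∀ ω, Z₂ ω ∈ Finset.Icc 1 K)
    (hindep : iIndepFun (m := fun _ : Fin 3 => (inferInstance : MeasurableSpace ℕ))
      ![Y, Z₁, Z₂] P)
    (hiid : IdentDistrib Z₁ Z₂ P P)
    (p₁ p₂ : ℕ → ℝ)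
    (hp₁ : ∀ j, p₁ j = (P {ω | Y ω = j}).toReal)
    (hp₂ : ∀ j, p₂ j = (P {ω | Z₁ ω = j}).toReal)
    (D : ℝ) (hD : D = ∫ ω, doorPhi (Y ω) (Z₁ ω) ∂P) :
    cov P (fun ω => doorPhi (Y ω) (Z₁ ω)) (fun ω => doorPhi (Y ω) (Z₂ ω)) =
      (∑ j ∈ Finset.Icc 1 (K - 1),
          p₁ j * (∑ l ∈ Finset.Icc j K, p₂ l) * (∑ l ∈ Finset.Icc (j + 1) K, p₂ l))
        + (1 / 4) * ∑ j ∈ Finset.Icc 1 K, p₁ j * (p₂ j) ^ 2 - D ^ 2 := by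
  classical
  have hmYj : ∀ j : ℕ, MeasurableSet {ω | Y ω = j} :=
    fun j => hY (measurableSet_singleton j)
  have hmZ₁j : ∀ j : ℕ, MeasurableSet {ω | Z₁ ω = j} :=
    fun j => hZ₁ (measurableSet_singleton j)
  have hmZ₂j : ∀ j : ℕ, MeasurableSet {ω | Z₂ ω = j} :=
    fun j => hZ₂ (measurableSet_singleton j)
  -- product rule from independence
  have hPmul : ∀ j l m : ℕ,
      P ({ω | Y ω = j} ∩ {ω | Z₁ ω = l} ∩ {ω | Z₂ ω = m})
        = P {ω | Y ω = j} * (P {ω | Z₁ ω = l} * P {ω | Z₂ ω = m}) := by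
    intro j l m
    have h := hindep.measure_inter_preimage_eq_mul (Finset.univ : Finset (Fin 3))
      (sets := ![({j} : Set ℕ), {l}, {m}])
      (fun i _ => by fin_cases i <;> exact measurableSet_singleton _)
    have hL : (⋂ i ∈ (Finset.univ : Finset (Fin 3)),
        (![Y, Z₁, Z₂] i) ⁻¹' (![({j} : Set ℕ), {l}, {m}] i))
        = {ω | Y ω = j} ∩ {ω | Z₁ ω = l} ∩ {ω | Z₂ ω = m} := by
      ext ω
      simp [Fin.forall_fin_succ, and_assoc]
    rw [hL, Fin.prod_univ_three] at h
    simp only [mul_assoc] at h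
    exact h
  have hZ₂eq : ∀ m : ℕ, P {ω | Z₂ ω = m} = P {ω | Z₁ ω = m} :=
    fun m => (hiid.measure_mem_eq (measurableSet_singleton m)).symm
  set S : Finset ℕ := Finset.Icc 1 K with hS
  -- the master integration formula
  have key : ∀ F : ℕ → ℕ → ℕ → ℝ,
      (∫ ω, F (Y ω) (Z₁ ω) (Z₂ ω) ∂P)
        = ∑ j ∈ S, ∑ l ∈ S, ∑ m ∈ S, p₁ j * p₂ l * p₂ m * F j l m := by
    intro F
    have hpt : ∀ ω, F (Y ω) (Z₁ ω) (Z₂ ω)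
        = ∑ q ∈ S ×ˢ S ×ˢ S, Set.indicator
            ({ω | Y ω = q.1} ∩ {ω | Z₁ ω = q.2.1} ∩ {ω | Z₂ ω = q.2.2})
            (fun _ => F q.1 q.2.1 q.2.2) ω := by
      intro ω
      rw [Finset.sum_eq_single_of_mem (Y ω, Z₁ ω, Z₂ ω)
          (Finset.mem_product.2 ⟨hYrange ω,
            Finset.mem_product.2 ⟨hZ₁range ω, hZ₂range ω⟩⟩)]
      · rw [Set.indicator_of_mem]
        exact ⟨⟨rfl, rfl⟩, rfl⟩
      · intro q _ hne
        refine Set.indicator_of_notMem (fun hmem => hne ?_) _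
        obtain ⟨⟨h1, h2⟩, h3⟩ := hmem
        exact Prod.ext_iff.mpr ⟨h1.symm, Prod.ext_iff.mpr ⟨h2.symm, h3.symm⟩⟩
    have hint : ∀ q : ℕ × ℕ × ℕ,
        (∫ ω, Set.indicator
            ({ω | Y ω = q.1} ∩ {ω | Z₁ ω = q.2.1} ∩ {ω | Z₂ ω = q.2.2})
            (fun _ => F q.1 q.2.1 q.2.2) ω ∂P)
          = p₁ q.1 * p₂ q.2.1 * p₂ q.2.2 * F q.1 q.2.1 q.2.2 := by
      intro q
      rw [integral_indicator_const _ (((hmYj _).inter (hmZ₁j _)).inter (hmZ₂j _)),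
        measureReal_def, hPmul, hZ₂eq, hp₁ q.1, hp₂ q.2.1, hp₂ q.2.2, smul_eq_mul,
        ENNReal.toReal_mul, ENNReal.toReal_mul]
      ring
    simp_rw [hpt]
    rw [integral_finset_sum _ (fun q _ =>
      (integrable_const _).indicator (((hmYj _).inter (hmZ₁j _)).inter (hmZ₂j _)))]
    simp only [Finset.sum_product]
    exact Finset.sum_congr rfl fun j _ => Finset.sum_congr rfl
      fun l _ => Finset.sum_congr rfl fun m _ => hint (j, l, m)
  -- total masses
  have htot : ∀ (X : Ω → ℕ), Measurable X → (∀ ω, X ω ∈ S) →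
      (∑ j ∈ S, (P {ω | X ω = j}).toReal) = 1 := by
    intro X hX hXr
    have hdisj : (↑S : Set ℕ).PairwiseDisjoint fun j => {ω | X ω = j} := by
      intro a _ b _ hab
      simp only [Function.onFun, Set.disjoint_left]
      rintro ω (h1 : X ω = a) (h2 : X ω = b)
      exact hab (h1.symm.trans h2)
    have huniv : (⋃ j ∈ S, {ω | X ω = j}) = Set.univ := by
      ext ω
      simp only [Set.mem_iUnion, Set.mem_univ, iff_true, Set.mem_setOf_eq]
      exact ⟨X ω, hXr ω, rfl⟩
    rw [← ENNReal.toReal_sum (fun j _ => measure_ne_top P _),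
      ← measure_biUnion_finset hdisj (fun j _ => hX (measurableSet_singleton j)),
      huniv, measure_univ, ENNReal.toReal_one]
  have hs₁ : ∑ j ∈ S, p₁ j = 1 := by
    simp_rw [hp₁]; exact htot Y hY hYrange
  have hs₂ : ∑ j ∈ S, p₂ j = 1 := by
    simp_rw [hp₂]; exact htot Z₁ hZ₁ hZ₁range
  -- expectation of φ(Y,Z₁)
  have hEf : D = ∑ j ∈ S, p₁ j * (∑ l ∈ S, p₂ l * doorPhi j l) := by
    rw [hD]
    have h := key (fun j l _ => doorPhi j l)
    rw [h]
    refine Finset.sum_congr rfl fun j _ => ?_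
    calc ∑ l ∈ S, ∑ m ∈ S, p₁ j * p₂ l * p₂ m * doorPhi j l
        = ∑ l ∈ S, (p₁ j * (p₂ l * doorPhi j l)) * ∑ m ∈ S, p₂ m := by
          refine Finset.sum_congr rfl fun l _ => ?_
          rw [Finset.mul_sum]
          exact Finset.sum_congr rfl fun m _ => by ring
      _ = ∑ l ∈ S, p₁ j * (p₂ l * doorPhi j l) := by
          simp only [hs₂, mul_one]
      _ = p₁ j * (∑ l ∈ S, p₂ l * doorPhi j l) := by
          rw [Finset.mul_sum]
  -- expectation of φ(Y,Z₂)
  have hEg : (∫ ω, doorPhi (Y ω) (Z₂ ω) ∂P) = D := by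
    have h := key (fun j _ m => doorPhi j m)
    rw [h, hEf]
    refine Finset.sum_congr rfl fun j _ => ?_
    calc ∑ l ∈ S, ∑ m ∈ S, p₁ j * p₂ l * p₂ m * doorPhi j m
        = ∑ l ∈ S, p₂ l * ∑ m ∈ S, p₁ j * (p₂ m * doorPhi j m) := by
          refine Finset.sum_congr rfl fun l _ => ?_
          rw [Finset.mul_sum]
          exact Finset.sum_congr rfl fun m _ => by ring
      _ = (∑ l ∈ S, p₂ l) * ∑ m ∈ S, p₁ j * (p₂ m * doorPhi j m) := by
          rw [Finset.sum_mul]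
      _ = p₁ j * (∑ l ∈ S, p₂ l * doorPhi j l) := by
          rw [hs₂, one_mul, Finset.mul_sum]
  -- covariance as a triple sum
  have hcov : cov P (fun ω => doorPhi (Y ω) (Z₁ ω)) (fun ω => doorPhi (Y ω) (Z₂ ω))
      = ∑ j ∈ S, p₁ j * ((∑ l ∈ S, p₂ l * doorPhi j l) - D) ^ 2 := by
    have h := key (fun j l m => (doorPhi j l - D) * (doorPhi j m - D))
    have hcov' : cov P (fun ω => doorPhi (Y ω) (Z₁ ω)) (fun ω => doorPhi (Y ω) (Z₂ ω))
        = ∫ ω, (doorPhi (Y ω) (Z₁ ω) - D) * (doorPhi (Y ω) (Z₂ ω) - D) ∂P := by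
      simp only [cov]
      rw [← hD, hEg]
    rw [hcov', h]
    refine Finset.sum_congr rfl fun j _ => ?_
    have hW : (∑ l ∈ S, p₂ l * (doorPhi j l - D))
        = (∑ l ∈ S, p₂ l * doorPhi j l) - D := by
      simp only [mul_sub]
      rw [Finset.sum_sub_distrib, ← Finset.sum_mul, hs₂, one_mul]
    calc ∑ l ∈ S, ∑ m ∈ S, p₁ j * p₂ l * p₂ m * ((doorPhi j l - D) * (doorPhi j m - D))
        = ∑ l ∈ S, (p₁ j * (p₂ l * (doorPhi j l - D)))
            * ∑ m ∈ S, p₂ m * (doorPhi j m - D) := by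
          refine Finset.sum_congr rfl fun l _ => ?_
          rw [Finset.mul_sum]
          exact Finset.sum_congr rfl fun m _ => by ring
      _ = (∑ l ∈ S, p₁ j * (p₂ l * (doorPhi j l - D)))
            * ∑ m ∈ S, p₂ m * (doorPhi j m - D) := by
          rw [Finset.sum_mul]
      _ = p₁ j * ((∑ l ∈ S, p₂ l * doorPhi j l) - D) ^ 2 := by
          rw [← Finset.mul_sum, hW]; ring
  -- expand the square
  have hexp : (∑ j ∈ S, p₁ j * ((∑ l ∈ S, p₂ l * doorPhi j l) - D) ^ 2)
      = (∑ j ∈ S, p₁ j * (∑ l ∈ S, p₂ l * doorPhi j l) ^ 2) - D ^ 2 := by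
    have h1 : ∀ j ∈ S, p₁ j * ((∑ l ∈ S, p₂ l * doorPhi j l) - D) ^ 2
        = (p₁ j * (∑ l ∈ S, p₂ l * doorPhi j l) ^ 2
            - (2 * D) * (p₁ j * (∑ l ∈ S, p₂ l * doorPhi j l)))
          + (D ^ 2) * p₁ j := fun j _ => by ring
    rw [Finset.sum_congr rfl h1, Finset.sum_add_distrib, Finset.sum_sub_distrib,
      ← Finset.mul_sum, ← Finset.mul_sum, ← hEf, hs₁]
    ring
  -- compute the kernel sum
  have hTj : ∀ j ∈ S, (∑ l ∈ S, p₂ l * doorPhi j l)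
      = (∑ l ∈ Finset.Icc (j + 1) K, p₂ l) + p₂ j / 2 := by
    intro j hj
    calc ∑ l ∈ S, p₂ l * doorPhi j l
        = ∑ l ∈ S, ((if j < l then p₂ l else 0) + (if j = l then p₂ l / 2 else 0)) := by
          refine Finset.sum_congr rfl fun l _ => ?_
          simp only [doorPhi]
          split_ifs <;> ring
      _ = (∑ l ∈ S, if j < l then p₂ l else 0)
            + ∑ l ∈ S, if j = l then p₂ l / 2 else 0 := Finset.sum_add_distrib
      _ = (∑ l ∈ Finset.Icc (j + 1) K, p₂ l) + p₂ j / 2 := by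
          congr 1
          · rw [show Finset.Icc (j + 1) K = S.filter (fun l => j < l) from by
              ext l
              simp only [hS, Finset.mem_filter, Finset.mem_Icc]
              omega, Finset.sum_filter]
          · rw [Finset.sum_ite_eq, if_pos hj]
  -- splitting the Icc sums
  have hsplit : ∀ j, j ≤ K → (∑ l ∈ Finset.Icc j K, p₂ l)
      = p₂ j + ∑ l ∈ Finset.Icc (j + 1) K, p₂ l := by
    intro j hjK
    rw [Finset.Icc_add_one_left_eq_Ioc, Finset.Icc_eq_cons_Ioc hjK, Finset.sum_cons]
  -- the main algebraic identity
  have hmain : (∑ j ∈ S, p₁ j * (∑ l ∈ S, p₂ l * doorPhi j l) ^ 2)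
      = (∑ j ∈ Finset.Icc 1 (K - 1),
          p₁ j * (∑ l ∈ Finset.Icc j K, p₂ l) * (∑ l ∈ Finset.Icc (j + 1) K, p₂ l))
        + (1 / 4) * ∑ j ∈ S, p₁ j * (p₂ j) ^ 2 := by
    have hper : ∀ j ∈ S, p₁ j * (∑ l ∈ S, p₂ l * doorPhi j l) ^ 2
        = p₁ j * (∑ l ∈ Finset.Icc j K, p₂ l) * (∑ l ∈ Finset.Icc (j + 1) K, p₂ l)
          + (1 / 4) * (p₁ j * (p₂ j) ^ 2) := by
      intro j hj
      have hjK : j ≤ K := (Finset.mem_Icc.mp (hS ▸ hj)).2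
      rw [hTj j hj, hsplit j hjK]
      ring
    rw [Finset.sum_congr rfl hper, Finset.sum_add_distrib, ← Finset.mul_sum]
    congr 1
    have hSrw : S = Finset.Icc 1 ((K - 1) + 1) := by rw [hS, Nat.sub_add_cancel hK]
    rw [hSrw, Finset.sum_Icc_succ_top (by omega : 1 ≤ (K - 1) + 1)]
    have hzero : (∑ l ∈ Finset.Icc ((K - 1 + 1) + 1) K, p₂ l) = 0 := by
      rw [Finset.Icc_eq_empty (by omega), Finset.sum_empty]
    rw [hzero, mul_zero, add_zero]
  rw [hcov, hexp, hmain]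
end

section
/- Let K ≥ 1, let Y₁, Y₂ be i.i.d. random variables with values in {1,…,K}, and let Z be a random variable with values in {1,…,K}, with Y₁, Y₂, Z mutually independent. With φ(y,y') = 1{y < y'} + (1/2)·1{y = y'}, p₁(j) = P(Y₁ = j), p₂(j) = P(Z = j), and D = E[φ(Y₁,Z)], the covariance with a shared control observation satisfies Cov(φ(Y₁,Z), φ(Y₂,Z)) = Σ_{l=1}^{K−1} p₂(l)·(Σ_{j=l}^{K} p₁(j))·(Σ_{j=l+1}^{K} p₁(j)) + (1/4) Σ_{l=1}^{K} p₂(l)·p₁(l)² − (1 − D)². -/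
open MeasureTheory ProbabilityTheory Finset

section aux

variable {Ω : Type*} [MeasurableSpace Ω] (P : Measure Ω) [IsProbabilityMeasure P]

lemma door_ptwise {I : Type*} [DecidableEq I] (σ : Ω → I) (s : Finset I)
    (hσ : ∀ ω, σ ω ∈ s) (G : I → ℝ) (ω : Ω) :
    G (σ ω) = ∑ i ∈ s, Set.indicator {ω' | σ ω' = i} (fun _ => G i) ω := by
  have h : ∀ i, Set.indicator {ω' | σ ω' = i} (fun _ => G i) ω
      = if σ ω = i then G i else 0 := by
    intro i; by_cases h : σ ω = i <;> simp [Set.indicator, h]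
  simp only [h]
  rw [Finset.sum_ite_eq s (σ ω) G]
  simp [hσ ω]

lemma door_integrable_comp {I : Type*} [DecidableEq I] (σ : Ω → I) (s : Finset I)
    (hσ : ∀ ω, σ ω ∈ s) (hm : ∀ i, MeasurableSet {ω | σ ω = i}) (G : I → ℝ) :
    Integrable (fun ω => G (σ ω)) P := by
  have h : (fun ω => G (σ ω)) =
      fun ω => ∑ i ∈ s, Set.indicator {ω' | σ ω' = i} (fun _ => G i) ω := by
    funext ω; exact door_ptwise σ s hσ G ω
  rw [h]
  exact integrable_finset_sum _ fun i _ => (integrable_const _).indicator (hm i)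

lemma door_integral_comp {I : Type*} [DecidableEq I] (σ : Ω → I) (s : Finset I)
    (hσ : ∀ ω, σ ω ∈ s) (hm : ∀ i, MeasurableSet {ω | σ ω = i}) (G : I → ℝ) :
    ∫ ω, G (σ ω) ∂P = ∑ i ∈ s, G i * (P {ω | σ ω = i}).toReal := by
  have h1 : ∫ ω, G (σ ω) ∂P
      = ∑ i ∈ s, ∫ ω, Set.indicator {ω' | σ ω' = i} (fun _ => G i) ω ∂P := by
    rw [← integral_finset_sum _ fun i _ => (integrable_const _).indicator (hm i)]
    exact integral_congr_ae (Filter.Eventually.of_forall fun ω => door_ptwise σ s hσ G ω)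
  rw [h1]
  refine Finset.sum_congr rfl fun i _ => ?_
  rw [integral_indicator_const _ (hm i)]
  simp [mul_comm, Measure.real]

lemma door_sum_probs {I : Type*} [DecidableEq I] (σ : Ω → I) (s : Finset I)
    (hσ : ∀ ω, σ ω ∈ s) (hm : ∀ i, MeasurableSet {ω | σ ω = i}) :
    ∑ i ∈ s, (P {ω | σ ω = i}).toReal = 1 := by
  have h := door_integral_comp P σ s hσ hm (fun _ => 1)
  simpa using h.symm

lemma door_algebra_main (K : ℕ) (hK : 1 ≤ K) (p₁ p₂ : ℕ → ℝ)
    (h1 : ∑ j ∈ Icc 1 K, p₁ j = 1) (h2 : ∑ l ∈ Icc 1 K, p₂ l = 1) :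
    (∑ l ∈ Icc 1 K, p₂ l * (∑ j ∈ Icc 1 K, doorPhi j l * p₁ j) ^ 2)
      - (∑ l ∈ Icc 1 K, p₂ l * (∑ j ∈ Icc 1 K, doorPhi j l * p₁ j)) ^ 2 =
    (∑ l ∈ Icc 1 (K - 1),
        p₂ l * (∑ j ∈ Icc l K, p₁ j) * (∑ j ∈ Icc (l + 1) K, p₁ j))
      + (1 / 4) * ∑ l ∈ Icc 1 K, p₂ l * (p₁ l) ^ 2
      - (1 - (∑ l ∈ Icc 1 K, p₂ l * (∑ j ∈ Icc 1 K, doorPhi j l * p₁ j))) ^ 2 := by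
  set T : ℕ → ℝ := fun l => ∑ j ∈ Icc l K, p₁ j with hT
  set A : ℕ → ℝ := fun l => ∑ j ∈ Icc 1 K, doorPhi j l * p₁ j with hA
  set D : ℝ := ∑ l ∈ Icc 1 K, p₂ l * A l with hD
  have hTrec : ∀ l ∈ Icc 1 K, T l = p₁ l + T (l + 1) := by
    intro l hl
    simp only [mem_Icc] at hl
    have hins : Icc l K = insert l (Icc (l + 1) K) := by
      ext x; simp only [mem_Icc, mem_insert]; omega
    simp only [hT, hins]
    rw [Finset.sum_insert (by simp [mem_Icc])]
  have hAform : ∀ l ∈ Icc 1 K, A l = 1 - (T l + T (l + 1)) / 2 := by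
    intro l hl
    simp only [mem_Icc] at hl
    have hsplit : (∑ j ∈ Icc 1 (l - 1), p₁ j) + T l = 1 := by
      rw [← h1, hT]
      rw [← Finset.sum_union (by
        simp only [Finset.disjoint_left, mem_Icc]; intro a ha hb; omega)]
      congr 1
      ext x; simp only [mem_Icc, mem_union]; omega
    have hpt : ∀ j, doorPhi j l * p₁ j
        = (if j < l then p₁ j else 0) + (if j = l then p₁ j / 2 else 0) := by
      intro j
      by_cases hjl : j < l <;> by_cases hje : j = l <;>
        simp [doorPhi, hjl, hje] <;> ring
    have hAeq : A l = (∑ j ∈ Icc 1 (l - 1), p₁ j) + p₁ l / 2 := by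
      simp only [hA, hpt, Finset.sum_add_distrib]
      congr 1
      · rw [← Finset.sum_filter]
        congr 1
        ext x; simp only [mem_Icc, mem_filter]; omega
      · rw [Finset.sum_ite_eq' (Icc 1 K) l (fun j => p₁ j / 2)]
        simp [mem_Icc, hl.1, hl.2]
    have h5 := hTrec l (by simp [mem_Icc]; omega)
    rw [hAeq]
    linarith
  have hterm : ∀ l ∈ Icc 1 K,
      p₂ l * (A l) ^ 2
        = p₂ l * T l * T (l + 1) + (1 / 4) * (p₂ l * (p₁ l) ^ 2)
          + (p₂ l * (2 * A l) - p₂ l) := by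
    intro l hl
    have h3 := hAform l hl
    have h4 := hTrec l hl
    have hp : p₁ l = T l - T (l + 1) := by linarith
    rw [h3, hp]
    ring
  have hsum : ∑ l ∈ Icc 1 K, p₂ l * (A l) ^ 2
      = (∑ l ∈ Icc 1 K, p₂ l * T l * T (l + 1))
        + (1 / 4) * (∑ l ∈ Icc 1 K, p₂ l * (p₁ l) ^ 2) + (2 * D - 1) := by
    rw [Finset.sum_congr rfl hterm]
    rw [Finset.sum_add_distrib, Finset.sum_add_distrib, Finset.sum_sub_distrib,
      ← Finset.mul_sum, h2]
    have h6 : ∑ l ∈ Icc 1 K, p₂ l * (2 * A l) = 2 * D := by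
      rw [hD, Finset.mul_sum]
      exact Finset.sum_congr rfl fun l _ => by ring
    rw [h6]
  have hdrop : ∑ l ∈ Icc 1 K, p₂ l * T l * T (l + 1)
      = ∑ l ∈ Icc 1 (K - 1), p₂ l * T l * T (l + 1) := by
    have hins : Icc 1 K = insert K (Icc 1 (K - 1)) := by
      ext x; simp only [mem_Icc, mem_insert]; omega
    rw [hins, Finset.sum_insert (by simp [mem_Icc]; omega)]
    have h7 : T (K + 1) = 0 := by
      simp [hT, Finset.Icc_eq_empty_of_lt (by omega : K < K + 1)]
    rw [h7]; ring
  rw [hsum, hdrop]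
  ring

end aux

/-- For i.i.d. `Y₁, Y₂` with values in `{1,…,K}` and `Z` with values in
`{1,…,K}`, with `Y₁, Y₂, Z` mutually independent, `p₁(j) = P(Y₁=j)`, `p₂(j) = P(Z=j)`, and
`D = E[φ(Y₁,Z)]`, the covariance with a shared control observation satisfies
`Cov(φ(Y₁,Z), φ(Y₂,Z)) = ∑_{l=1}^{K−1} p₂(l)(∑_{j=l}^{K} p₁(j))(∑_{j=l+1}^{K} p₁(j))
  + (1/4)∑_{l=1}^{K} p₂(l) p₁(l)² − (1 − D)²`. -/
theorem door_covariance_shared_control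
    {Ω : Type*} [MeasurableSpace Ω] (P : Measure Ω) [IsProbabilityMeasure P]
    (K : ℕ) (hK : 1 ≤ K)
    (Y₁ Y₂ Z : Ω → ℕ)
    (hY₁ : Measurable Y₁) (hY₂ : Measurable Y₂) (hZ : Measurable Z)
    (hY₁range : ∀ ω, Y₁ ω ∈ Finset.Icc 1 K)
    (hY₂range : ∀ ω, Y₂ ω ∈ Finset.Icc 1 K)
    (hZrange : ∀ ω, Z ω ∈ Finset.Icc 1 K)
    (hindep : iIndepFun (β := fun _ : Fin 3 => ℕ)
      ![Y₁, Y₂, Z] P)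
    (hiid : IdentDistrib Y₁ Y₂ P P)
    (p₁ p₂ : ℕ → ℝ)
    (hp₁ : ∀ j, p₁ j = (P {ω | Y₁ ω = j}).toReal)
    (hp₂ : ∀ j, p₂ j = (P {ω | Z ω = j}).toReal)
    (D : ℝ) (hD : D = ∫ ω, doorPhi (Y₁ ω) (Z ω) ∂P) :
    cov P (fun ω => doorPhi (Y₁ ω) (Z ω)) (fun ω => doorPhi (Y₂ ω) (Z ω)) =
      (∑ l ∈ Finset.Icc 1 (K - 1),
          p₂ l * (∑ j ∈ Finset.Icc l K, p₁ j) * (∑ j ∈ Finset.Icc (l + 1) K, p₁ j))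
        + (1 / 4) * ∑ l ∈ Finset.Icc 1 K, p₂ l * (p₁ l) ^ 2 - (1 - D) ^ 2 := by
  classical
  set s : Finset ℕ := Finset.Icc 1 K with hs
  -- p₁ also gives Y₂ probabilities
  have hp₁' : ∀ j, p₁ j = (P {ω | Y₂ ω = j}).toReal := by
    intro j
    rw [hp₁ j]
    congr 1
    have := hiid.measure_mem_eq (measurableSet_singleton j)
    simpa [Set.preimage, Set.mem_singleton_iff] using this
  -- measurability of point events
  have hmY₁ : ∀ j, MeasurableSet {ω | Y₁ ω = j} :=
    fun j => hY₁ (measurableSet_singleton j)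
  have hmY₂ : ∀ j, MeasurableSet {ω | Y₂ ω = j} :=
    fun j => hY₂ (measurableSet_singleton j)
  have hmZ : ∀ j, MeasurableSet {ω | Z ω = j} :=
    fun j => hZ (measurableSet_singleton j)
  -- pair probabilities
  have hind13 : IndepFun Y₁ Z P := hindep.indepFun (show (0 : Fin 3) ≠ 2 by decide)
  have hind23 : IndepFun Y₂ Z P := hindep.indepFun (show (1 : Fin 3) ≠ 2 by decide)
  have hP1Z : ∀ j l : ℕ, (P {ω | (Y₁ ω, Z ω) = (j, l)}).toReal = p₁ j * p₂ l := by
    intro j l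
    have h := hind13.measure_inter_preimage_eq_mul {j} {l} (measurableSet_singleton j)
      (measurableSet_singleton l)
    have he : {ω | (Y₁ ω, Z ω) = (j, l)} = Y₁ ⁻¹' {j} ∩ Z ⁻¹' {l} := by
      ext ω; simp [Prod.ext_iff]
    rw [he, h, ENNReal.toReal_mul, hp₁, hp₂]
    rfl
  have hP2Z : ∀ j l : ℕ, (P {ω | (Y₂ ω, Z ω) = (j, l)}).toReal = p₁ j * p₂ l := by
    intro j l
    have h := hind23.measure_inter_preimage_eq_mul {j} {l} (measurableSet_singleton j)
      (measurableSet_singleton l)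
    have he : {ω | (Y₂ ω, Z ω) = (j, l)} = Y₂ ⁻¹' {j} ∩ Z ⁻¹' {l} := by
      ext ω; simp [Prod.ext_iff]
    rw [he, h, ENNReal.toReal_mul, hp₁', hp₂]
    rfl
  -- triple probability
  have hP3 : ∀ j k l : ℕ, (P {ω | (Y₁ ω, Y₂ ω, Z ω) = (j, k, l)}).toReal
      = p₁ j * p₁ k * p₂ l := by
    intro j k l
    have h := hindep.measure_inter_preimage_eq_mul (Finset.univ)
      (sets := ![{j}, {k}, {l}]) (fun i _ => by fin_cases i <;> exact measurableSet_singleton _)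
    have he : (⋂ i ∈ (Finset.univ : Finset (Fin 3)), ![Y₁, Y₂, Z] i ⁻¹' ![{j}, {k}, {l}] i)
        = {ω | (Y₁ ω, Y₂ ω, Z ω) = (j, k, l)} := by
      ext ω
      simp [Fin.forall_fin_succ, Prod.ext_iff, and_assoc]
    rw [he, Fin.prod_univ_three] at h
    rw [h, ENNReal.toReal_mul, ENNReal.toReal_mul, hp₁, hp₁', hp₂]
    rfl
  -- selectors
  have hm1 : ∀ i : ℕ × ℕ, MeasurableSet {ω | (Y₁ ω, Z ω) = i} := by
    intro i
    have he : {ω | (Y₁ ω, Z ω) = i} = {ω | Y₁ ω = i.1} ∩ {ω | Z ω = i.2} := by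
      ext ω; simp [Prod.ext_iff]
    rw [he]; exact (hmY₁ i.1).inter (hmZ i.2)
  have hm2 : ∀ i : ℕ × ℕ, MeasurableSet {ω | (Y₂ ω, Z ω) = i} := by
    intro i
    have he : {ω | (Y₂ ω, Z ω) = i} = {ω | Y₂ ω = i.1} ∩ {ω | Z ω = i.2} := by
      ext ω; simp [Prod.ext_iff]
    rw [he]; exact (hmY₂ i.1).inter (hmZ i.2)
  have hm3 : ∀ i : ℕ × ℕ × ℕ, MeasurableSet {ω | (Y₁ ω, Y₂ ω, Z ω) = i} := by
    intro i
    have he : {ω | (Y₁ ω, Y₂ ω, Z ω) = i}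
        = {ω | Y₁ ω = i.1} ∩ ({ω | Y₂ ω = i.2.1} ∩ {ω | Z ω = i.2.2}) := by
      ext ω; simp [Prod.ext_iff]
    rw [he]; exact (hmY₁ i.1).inter ((hmY₂ i.2.1).inter (hmZ i.2.2))
  have hσ1 : ∀ ω, (Y₁ ω, Z ω) ∈ s ×ˢ s := fun ω => by
    exact Finset.mem_product.2 ⟨hY₁range ω, hZrange ω⟩
  have hσ2 : ∀ ω, (Y₂ ω, Z ω) ∈ s ×ˢ s := fun ω => by
    exact Finset.mem_product.2 ⟨hY₂range ω, hZrange ω⟩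
  have hσ3 : ∀ ω, (Y₁ ω, Y₂ ω, Z ω) ∈ s ×ˢ (s ×ˢ s) := fun ω => by
    exact Finset.mem_product.2 ⟨hY₁range ω, Finset.mem_product.2 ⟨hY₂range ω, hZrange ω⟩⟩
  -- abbreviations
  set A : ℕ → ℝ := fun l => ∑ j ∈ s, doorPhi j l * p₁ j with hA
  -- total masses
  have hsum1 : ∑ j ∈ s, p₁ j = 1 := by
    have h := door_sum_probs P Y₁ s (fun ω => hY₁range ω) hmY₁
    rw [← h]; exact Finset.sum_congr rfl fun j _ => hp₁ j
  have hsum2 : ∑ l ∈ s, p₂ l = 1 := by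
    have h := door_sum_probs P Z s (fun ω => hZrange ω) hmZ
    rw [← h]; exact Finset.sum_congr rfl fun l _ => hp₂ l
  -- integrals
  have hIf : ∫ ω, doorPhi (Y₁ ω) (Z ω) ∂P = ∑ l ∈ s, p₂ l * A l := by
    have h := door_integral_comp P (fun ω => (Y₁ ω, Z ω)) (s ×ˢ s) hσ1 hm1
      (fun i => doorPhi i.1 i.2)
    rw [show (fun ω => doorPhi (Y₁ ω) (Z ω))
        = fun ω => (fun i : ℕ × ℕ => doorPhi i.1 i.2) (Y₁ ω, Z ω) from rfl, h]
    rw [Finset.sum_product]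
    rw [Finset.sum_comm]
    refine Finset.sum_congr rfl fun l _ => ?_
    rw [hA, Finset.mul_sum]
    refine Finset.sum_congr rfl fun j _ => ?_
    rw [hP1Z j l]
    ring
  have hIg : ∫ ω, doorPhi (Y₂ ω) (Z ω) ∂P = ∑ l ∈ s, p₂ l * A l := by
    have h := door_integral_comp P (fun ω => (Y₂ ω, Z ω)) (s ×ˢ s) hσ2 hm2
      (fun i => doorPhi i.1 i.2)
    rw [show (fun ω => doorPhi (Y₂ ω) (Z ω))
        = fun ω => (fun i : ℕ × ℕ => doorPhi i.1 i.2) (Y₂ ω, Z ω) from rfl, h]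
    rw [Finset.sum_product]
    rw [Finset.sum_comm]
    refine Finset.sum_congr rfl fun l _ => ?_
    rw [hA, Finset.mul_sum]
    refine Finset.sum_congr rfl fun j _ => ?_
    rw [hP2Z j l]
    ring
  have hIfg : ∫ ω, doorPhi (Y₁ ω) (Z ω) * doorPhi (Y₂ ω) (Z ω) ∂P
      = ∑ l ∈ s, p₂ l * (A l) ^ 2 := by
    have h := door_integral_comp P (fun ω => (Y₁ ω, Y₂ ω, Z ω)) (s ×ˢ (s ×ˢ s)) hσ3 hm3
      (fun i => doorPhi i.1 i.2.2 * doorPhi i.2.1 i.2.2)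
    rw [show (fun ω => doorPhi (Y₁ ω) (Z ω) * doorPhi (Y₂ ω) (Z ω))
        = fun ω => (fun i : ℕ × ℕ × ℕ => doorPhi i.1 i.2.2 * doorPhi i.2.1 i.2.2)
            (Y₁ ω, Y₂ ω, Z ω) from rfl, h]
    simp only [Finset.sum_product]
    have hre : ∀ j ∈ s, ∀ k ∈ s, ∀ l ∈ s,
        doorPhi j l * doorPhi k l * (P {ω | (Y₁ ω, Y₂ ω, Z ω) = (j, k, l)}).toReal
          = (doorPhi j l * p₁ j) * (doorPhi k l * p₁ k) * p₂ l := by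
      intro j _ k _ l _
      rw [hP3 j k l]; ring
    calc ∑ j ∈ s, ∑ k ∈ s, ∑ l ∈ s,
          doorPhi j l * doorPhi k l * (P {ω | (Y₁ ω, Y₂ ω, Z ω) = (j, k, l)}).toReal
        = ∑ j ∈ s, ∑ k ∈ s, ∑ l ∈ s,
            (doorPhi j l * p₁ j) * (doorPhi k l * p₁ k) * p₂ l := by
          refine Finset.sum_congr rfl fun j hj => Finset.sum_congr rfl fun k hk =>
            Finset.sum_congr rfl fun l hl => hre j hj k hk l hl
      _ = ∑ j ∈ s, ∑ l ∈ s, ∑ k ∈ s,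
            (doorPhi j l * p₁ j) * (doorPhi k l * p₁ k) * p₂ l := by
          exact Finset.sum_congr rfl fun j _ => Finset.sum_comm
      _ = ∑ l ∈ s, ∑ j ∈ s, ∑ k ∈ s,
            (doorPhi j l * p₁ j) * (doorPhi k l * p₁ k) * p₂ l := Finset.sum_comm
      _ = ∑ l ∈ s, p₂ l * (A l) ^ 2 := by
          refine Finset.sum_congr rfl fun l _ => ?_
          rw [hA, sq, Finset.sum_mul_sum, Finset.mul_sum]
          refine Finset.sum_congr rfl fun j _ => ?_
          rw [Finset.mul_sum]
          exact Finset.sum_congr rfl fun k _ => by ring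
  -- integrability
  have hfInt : Integrable (fun ω => doorPhi (Y₁ ω) (Z ω)) P :=
    door_integrable_comp P (fun ω => (Y₁ ω, Z ω)) (s ×ˢ s) hσ1 hm1 (fun i => doorPhi i.1 i.2)
  have hgInt : Integrable (fun ω => doorPhi (Y₂ ω) (Z ω)) P :=
    door_integrable_comp P (fun ω => (Y₂ ω, Z ω)) (s ×ˢ s) hσ2 hm2 (fun i => doorPhi i.1 i.2)
  have hfgInt : Integrable (fun ω => doorPhi (Y₁ ω) (Z ω) * doorPhi (Y₂ ω) (Z ω)) P :=
    door_integrable_comp P (fun ω => (Y₁ ω, Y₂ ω, Z ω)) (s ×ˢ (s ×ˢ s)) hσ3 hm3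
      (fun i => doorPhi i.1 i.2.2 * doorPhi i.2.1 i.2.2)
  -- covariance expansion
  set a : ℝ := ∫ ω, doorPhi (Y₁ ω) (Z ω) ∂P with ha
  set b : ℝ := ∫ ω, doorPhi (Y₂ ω) (Z ω) ∂P with hb
  have hcov : cov P (fun ω => doorPhi (Y₁ ω) (Z ω)) (fun ω => doorPhi (Y₂ ω) (Z ω))
      = (∫ ω, doorPhi (Y₁ ω) (Z ω) * doorPhi (Y₂ ω) (Z ω) ∂P) - a * b := by
    rw [cov]
    have hfun : (fun ω => (doorPhi (Y₁ ω) (Z ω) - a) * (doorPhi (Y₂ ω) (Z ω) - b))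
        = fun ω => doorPhi (Y₁ ω) (Z ω) * doorPhi (Y₂ ω) (Z ω)
            - (a * doorPhi (Y₂ ω) (Z ω) + (b * doorPhi (Y₁ ω) (Z ω) - a * b)) := by
      funext ω; ring
    rw [show (∫ ω, (doorPhi (Y₁ ω) (Z ω) - ∫ ω', doorPhi (Y₁ ω') (Z ω') ∂P)
          * (doorPhi (Y₂ ω) (Z ω) - ∫ ω', doorPhi (Y₂ ω') (Z ω') ∂P) ∂P)
        = ∫ ω, (doorPhi (Y₁ ω) (Z ω) - a) * (doorPhi (Y₂ ω) (Z ω) - b) ∂P from rfl]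
    rw [hfun]
    have hInt1 : Integrable (fun ω => b * doorPhi (Y₁ ω) (Z ω) - a * b) P :=
      (hfInt.const_mul b).sub (integrable_const (a * b))
    have hInt2 : Integrable
        (fun ω => a * doorPhi (Y₂ ω) (Z ω) + (b * doorPhi (Y₁ ω) (Z ω) - a * b)) P :=
      (hgInt.const_mul a).add hInt1
    rw [integral_sub hfgInt hInt2]
    rw [integral_add (hgInt.const_mul a) hInt1]
    rw [integral_sub (hfInt.const_mul b) (integrable_const (a * b))]
    rw [integral_const_mul, integral_const_mul, integral_const]
    simp only [← ha, ← hb, Measure.real, measure_univ, ENNReal.toReal_one, smul_eq_mul, one_mul]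
    ring
  rw [hcov, hIfg, hD, hIf, hIg, ← sq]
  exact door_algebra_main K hK p₁ p₂ hsum1 hsum2
end
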